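/- For integers N_r ≥ N_t ≥ 2 and ρ > 0: (N_t/ρ)^{N_t-1}/(N_r-1)! > 1/(N_r-N_t)! if and only if ρ < N_t·((N_r-N_t)!/(N_r-1)!)^{1/(N_t-1)}; i.e., α_MRC > α_ZF exactly when ρ is below the stated crossover SNR, and the crossover threshold N_t((N_r-N_t)!/(N_r-1)!)^{1/(N_t-1)} is a strictly decreasing function of N_r for fixed N_t. -/

import Mathlib

open Real

private lemma fact_ratio_step (Nt Nr : ℕ) (h2 : 2 ≤ Nt) (h : Nt ≤ Nr) :
    (Nat.factorial (Nr + 1 - Nt) : ℝ) / (Nat.factorial (Nr + 1 - 1)) <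
      (Nat.factorial (Nr - Nt) : ℝ) / (Nat.factorial (Nr - 1)) := by
  have hNr2 : 2 ≤ Nr := le_trans h2 h
  have h1 : Nr + 1 - Nt = (Nr - Nt) + 1 := by omega
  have h2' : Nr + 1 - 1 = (Nr - 1) + 1 := by omega
  rw [h1, h2', Nat.factorial_succ, Nat.factorial_succ]
  push_cast
  have hA : (0:ℝ) < (Nat.factorial (Nr - Nt) : ℝ) := by positivity
  have hB : (0:ℝ) < (Nat.factorial (Nr - 1) : ℝ) := by positivity
  rw [div_lt_div_iff₀ (by positivity) (by positivity)]
  have hlt : ((Nr - Nt : ℕ) : ℝ) + 1 < ((Nr - 1 : ℕ) : ℝ) + 1 := by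
    have : Nr - Nt < Nr - 1 := by omega
    exact_mod_cast Nat.succ_lt_succ this
  nlinarith [mul_pos hA hB]

private lemma fact_ratio_anti (Nt : ℕ) (h2 : 2 ≤ Nt) :
    ∀ Nr Nr' : ℕ, Nt ≤ Nr → Nr < Nr' →
      (Nat.factorial (Nr' - Nt) : ℝ) / (Nat.factorial (Nr' - 1)) <
        (Nat.factorial (Nr - Nt) : ℝ) / (Nat.factorial (Nr - 1)) := by
  intro Nr Nr' hle hlt
  induction Nr' with
  | zero => omega
  | succ m ih =>
    rcases Nat.lt_succ_iff_lt_or_eq.mp hlt with hm | hm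
    · exact lt_trans (fact_ratio_step Nt m h2 (by omega)) (ih hm)
    · subst hm; exact fact_ratio_step Nt Nr h2 hle

theorem stmt19 (Nt : ℕ) (hNt : 2 ≤ Nt) :
    (∀ Nr : ℕ, Nt ≤ Nr → ∀ ρ : ℝ, 0 < ρ →
      (((Nt : ℝ) / ρ) ^ (Nt - 1) / (Nat.factorial (Nr - 1)) >
          1 / (Nat.factorial (Nr - Nt)) ↔
        ρ < (Nt : ℝ) *
          ((Nat.factorial (Nr - Nt) : ℝ) / (Nat.factorial (Nr - 1))) ^
            ((1 : ℝ) / ((Nt : ℝ) - 1)))) ∧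
    (∀ Nr Nr' : ℕ, Nt ≤ Nr → Nr < Nr' →
      (Nt : ℝ) *
          ((Nat.factorial (Nr' - Nt) : ℝ) / (Nat.factorial (Nr' - 1))) ^
            ((1 : ℝ) / ((Nt : ℝ) - 1)) <
        (Nt : ℝ) *
          ((Nat.factorial (Nr - Nt) : ℝ) / (Nat.factorial (Nr - 1))) ^
            ((1 : ℝ) / ((Nt : ℝ) - 1))) := by
  have hNt1 : (1:ℝ) < (Nt:ℝ) := by exact_mod_cast Nat.lt_of_lt_of_le one_lt_two hNt
  have hNt0 : (0:ℝ) < (Nt:ℝ) := lt_trans one_pos hNt1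
  have hcast : ((Nt - 1 : ℕ) : ℝ) = (Nt:ℝ) - 1 := by
    push_cast [Nat.cast_sub (by omega : 1 ≤ Nt)]; ring
  have hz : (0:ℝ) < (Nt:ℝ) - 1 := by linarith
  constructor
  · intro Nr hNr ρ hρ
    set F1 : ℝ := (Nat.factorial (Nr - 1) : ℝ) with hF1def
    set F2 : ℝ := (Nat.factorial (Nr - Nt) : ℝ) with hF2def
    have hF1 : (0:ℝ) < F1 := by positivity
    have hF2 : (0:ℝ) < F2 := by positivity
    have ha : (0:ℝ) < (Nt:ℝ) / ρ := by positivity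
    rw [gt_iff_lt, div_lt_div_iff₀ hF2 hF1, one_mul, ← div_lt_iff₀ hF2]
    rw [show ((Nt:ℝ)/ρ) ^ (Nt - 1) = ((Nt:ℝ)/ρ) ^ (((Nt - 1 : ℕ):ℝ)) by
      rw [Real.rpow_natCast]]
    rw [hcast]
    rw [← Real.rpow_inv_lt_iff_of_pos (by positivity) ha.le hz]
    have he : (0:ℝ) < (F1 / F2) ^ ((Nt:ℝ) - 1)⁻¹ := Real.rpow_pos_of_pos (by positivity) _
    rw [lt_div_iff₀ hρ, ← lt_div_iff₀' he]
    have : (Nt:ℝ) / (F1 / F2) ^ ((Nt:ℝ) - 1)⁻¹ =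
        (Nt:ℝ) * (F2 / F1) ^ ((1:ℝ) / ((Nt:ℝ) - 1)) := by
      rw [one_div, div_eq_mul_inv, ← Real.inv_rpow (by positivity), inv_div]
    rw [this]
  · intro Nr Nr' hle hlt
    have h := fact_ratio_anti Nt hNt Nr Nr' hle hlt
    have hpos : (0:ℝ) ≤ (Nat.factorial (Nr' - Nt) : ℝ) / (Nat.factorial (Nr' - 1)) := by
      positivity
    have := Real.rpow_lt_rpow hpos h (by positivity : (0:ℝ) < (1:ℝ)/((Nt:ℝ)-1))
    exact mul_lt_mul_of_pos_left this hNt0
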